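/- arXiv:1404.0792 — 3 statements merged into one kernel-verified Lean document; each statement's English description precedes it below -/
import Mathlib

section
/- Set a = (n−2)/2 and let b ≤ a. Then there exists a constant C = C_b > 0 such that for every radially symmetric function u ∈ C¹(Ω̄) with u = 0 on ∂Ω (extended by 0 to all of ℝⁿ) and ∫_Ω |x|^{−a}|∇u|² dx < ∞, one has, for almost every x ∈ Ω, |u(x)| ≤ C |x|^{−(n−b−2)/2} (∫_Ω |y|^{−a} |∇u(y)|² dy)^{1/2}. -/
open MeasureTheory Filter

noncomputable section

/-- Euclidean space `ℝⁿ`. -/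
abbrev Euc (n : ℕ) := EuclideanSpace ℝ (Fin n)

/-- `Ω`, the open unit ball of `ℝⁿ`. -/
def Omeg (n : ℕ) : Set (Euc n) := Metric.ball 0 1

/-- `l = n/2` if `n` is even, `l = ⌊n/2⌋ + 1` if `n` is odd. -/
def lval (n : ℕ) : ℕ := if Even n then n / 2 else n / 2 + 1

/-- `p*(n) = 2(n+2)/(n-2)` if `n` is even, `2(⌊n/2⌋+2)/⌊n/2⌋` if `n` is odd. -/
def pstar (n : ℕ) : ℝ :=
  if Even n then 2 * ((n : ℝ) + 2) / ((n : ℝ) - 2)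
  else 2 * (((n / 2 : ℕ) : ℝ) + 2) / ((n / 2 : ℕ) : ℝ)

/-- The primitive `F(t) = ∫₀ᵗ f(s) ds`. -/
def Fprim (f : ℝ → ℝ) (t : ℝ) : ℝ := ∫ s in (0:ℝ)..t, f s

/-- A function on `ℝⁿ` is radially symmetric if it depends only on `|x|`. -/
def Radial (n : ℕ) (u : Euc n → ℝ) : Prop := ∀ x y : Euc n, ‖x‖ = ‖y‖ → u x = u y

/-- Locally Hölder continuous. -/
def LocHolder (f : ℝ → ℝ) : Prop :=
  ∀ x : ℝ, ∃ s ∈ nhds x, ∃ C γ : NNReal, 0 < γ ∧ γ ≤ 1 ∧ HolderOnWith C γ f s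

/-- Hypothesis (f1). -/
def Hf1 (f : ℝ → ℝ) : Prop :=
  LocHolder f ∧ (∀ z > 0, 0 ≤ f z) ∧
  f =o[nhds 0] (fun z : ℝ => z) ∧
  Tendsto (fun z => f z / z) atTop atTop ∧
  ∀ z ≤ 0, f z = 0

/-- Hypothesis (f2), with explicit constants `C`, `p`. -/
def Hf2 (n : ℕ) (f : ℝ → ℝ) (C p : ℝ) : Prop :=
  0 < C ∧ 2 < p ∧ p < pstar n ∧ ∀ z : ℝ, |f z| ≤ C * (1 + |z|) ^ (p - 1)

/-- Hypothesis (f3), with explicit exponent `q`. -/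
def Hf3 (f : ℝ → ℝ) (q : ℝ) : Prop :=
  2 < q ∧ ∀ t : ℝ, q * Fprim f t ≤ t * f t

/-- Hypothesis (f4), with explicit exponents `μ₁`, `μ₂` and auxiliary function `g`. -/
def Hf4 (n : ℕ) (f g : ℝ → ℝ) (μ₁ μ₂ : ℝ) : Prop :=
  2 < μ₁ ∧ 2 < μ₂ ∧
  (∀ t ∈ Set.Icc (0:ℝ) 1, ∀ v ≥ (0:ℝ), t ^ (μ₁ - 1) * f v ≤ f (t * v)) ∧
  (∀ t ≥ (1:ℝ), ∀ v ≥ (0:ℝ), t ^ (μ₂ - 1) * g v ≤ f (t * v)) ∧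
  Continuous g ∧ (∀ z, 0 ≤ g z) ∧ g 0 = 0 ∧
  4 * (μ₁ - μ₂) / ((μ₁ - 2) * (μ₂ - 2)) < (n : ℝ) - (lval n : ℝ)

/-- The energy functional `I_α`. -/
def Ien (n : ℕ) (f : ℝ → ℝ) (α : ℝ) (u : Euc n → ℝ) : ℝ :=
  (1/2) * (∫ x in Omeg n, ‖gradient u x‖ ^ 2) - ∫ x in Omeg n, ‖x‖ ^ α * Fprim f (u x)

/-- A radial Nehari function for exponent `α`. -/
def RadNehari (n : ℕ) (f : ℝ → ℝ) (α : ℝ) (u : Euc n → ℝ) : Prop :=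
  Radial n u ∧ ContDiffOn ℝ 1 u (closure (Omeg n)) ∧
  (∀ x : Euc n, ‖x‖ = 1 → u x = 0) ∧ (∃ x, u x ≠ 0) ∧
  (∫ x in Omeg n, ‖gradient u x‖ ^ 2) = ∫ x in Omeg n, ‖x‖ ^ α * (f (u x) * u x)

/-- `m_{α,r}`, the infimum of `I_α` over radial Nehari functions. -/
def mrad (n : ℕ) (f : ℝ → ℝ) (α : ℝ) : ℝ :=
  sInf (Ien n f α '' {u | RadNehari n f α u})

/-- The Laplacian, as the sum of pure second derivatives. -/
def lapl (n : ℕ) (u : Euc n → ℝ) (x : Euc n) : ℝ :=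
  ∑ i : Fin n, iteratedFDeriv ℝ 2 u x ![EuclideanSpace.single i 1, EuclideanSpace.single i 1]

/-- Biradial symmetry: `u(y,z)` depends only on `(|y|,|z|)`,
`(y,z) ∈ ℝ^l × ℝ^{n-l}`. -/
def BiRadial (n : ℕ) (u : Euc n → ℝ) : Prop :=
  ∀ x y : Euc n,
    (∑ i : Fin n, if (i : ℕ) < lval n then (x i) ^ 2 else 0) =
      (∑ i : Fin n, if (i : ℕ) < lval n then (y i) ^ 2 else 0) →
    (∑ i : Fin n, if (i : ℕ) < lval n then 0 else (x i) ^ 2) =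
      (∑ i : Fin n, if (i : ℕ) < lval n then 0 else (y i) ^ 2) →
    u x = u y

/-- A biradial Nehari function for exponent `α`. -/
def BiNehari (n : ℕ) (f : ℝ → ℝ) (α : ℝ) (u : Euc n → ℝ) : Prop :=
  BiRadial n u ∧ ContDiffOn ℝ 1 u (closure (Omeg n)) ∧
  (∀ x : Euc n, ‖x‖ = 1 → u x = 0) ∧ (∃ x, u x ≠ 0) ∧
  (∫ x in Omeg n, ‖gradient u x‖ ^ 2) = ∫ x in Omeg n, ‖x‖ ^ α * (f (u x) * u x)

/-- `m_α^l`, the infimum of `I_α` over biradial Nehari functions. -/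
def mbl (n : ℕ) (f : ℝ → ℝ) (α : ℝ) : ℝ :=
  sInf (Ien n f α '' {u | BiNehari n f α u})

/-- The functional `J_γ(v) = ½∫_Ω |x|^{-γ}|∇v|² - ∫_Ω F(v)` (weight exponent `γ`). -/
def Jw (n : ℕ) (f : ℝ → ℝ) (γ : ℝ) (v : Euc n → ℝ) : ℝ :=
  (1/2) * (∫ x in Omeg n, ‖x‖ ^ (-γ) * ‖gradient v x‖ ^ 2) - ∫ x in Omeg n, Fprim f (v x)

/-- The Nehari-type set `M_γ` for the weight exponent `γ`. -/
def Mw (n : ℕ) (f : ℝ → ℝ) (γ : ℝ) : Set (Euc n → ℝ) :=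
  {v | Radial n v ∧ ContDiffOn ℝ 1 v (closure (Omeg n)) ∧
    (∀ x : Euc n, ‖x‖ = 1 → v x = 0) ∧ (∃ x, v x ≠ 0) ∧
    (∫ x in Omeg n, ‖x‖ ^ (-γ) * ‖gradient v x‖ ^ 2) = ∫ x in Omeg n, f (v x) * v x}

open Metric Set in
set_option maxHeartbeats 2000000 in
theorem statement4_aux (n : ℕ) (hn : 4 ≤ n) (u : Euc n → ℝ)
    (hrad : ∀ x y : Euc n, ‖x‖ = ‖y‖ → u x = u y)
    (hC1 : ContDiffOn ℝ 1 u (closedBall (0:Euc n) 1))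
    (hbd : ∀ x : Euc n, ‖x‖ = 1 → u x = 0)
    (hInt : IntegrableOn (fun x => ‖x‖ ^ (-(((n : ℝ) - 2) / 2)) * ‖gradient u x‖ ^ 2)
      (ball (0:Euc n) 1))
    (x : Euc n) (hx0 : 0 < ‖x‖) (hx1 : ‖x‖ < 1) :
    |u x| ≤
      Real.sqrt (2 / ((((n:ℝ)) * (volume (ball (0:Euc n) 1)).toReal) * ((n:ℝ) - 2)))
        * ‖x‖ ^ (-(((n:ℝ) - 2) / 4)) *
        Real.sqrt (∫ y in ball (0:Euc n) 1,
          ‖y‖ ^ (-(((n : ℝ) - 2) / 2)) * ‖gradient u y‖ ^ 2) := by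
  haveI : Nontrivial (Euc n) := by
    refine nontrivial_of_ne (EuclideanSpace.single (⟨0, by omega⟩ : Fin n) (1:ℝ)) 0 ?_
    intro h
    have := congrArg norm h
    rw [EuclideanSpace.norm_single] at this
    simp at this
  have hn4 : (4:ℝ) ≤ (n:ℝ) := by exact_mod_cast hn
  set a : ℝ := ((n:ℝ) - 2) / 2 with ha
  set r : ℝ := ‖x‖ with hr
  set e : Euc n := EuclideanSpace.single (⟨0, by omega⟩ : Fin n) (1:ℝ) with he'
  have he : ‖e‖ = 1 := by rw [he', EuclideanSpace.norm_single]; norm_num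
  have hse : ∀ s : ℝ, 0 ≤ s → ‖s • e‖ = s := by
    intro s hs; rw [norm_smul, he, mul_one, Real.norm_eq_abs, abs_of_nonneg hs]
  -- the 1-d profile and its derivative
  set G : ℝ → ℝ := fun t => u (t • e) with hG'
  set ψ : ℝ → ℝ := fun s => (fderivWithin ℝ u (closedBall (0:Euc n) 1) (s • e)) e with hψ'
  have hsmul_cont : Continuous (fun s : ℝ => s • e) := continuous_id.smul continuous_const
  have hmaps : MapsTo (fun s : ℝ => s • e) (Icc (0:ℝ) 1) (closedBall (0:Euc n) 1) := by
    intro s hs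
    rw [mem_closedBall_zero_iff, hse s hs.1]
    exact hs.2
  have hGc : ContinuousOn G (Icc (0:ℝ) 1) :=
    hC1.continuousOn.comp hsmul_cont.continuousOn hmaps
  have hψc : ContinuousOn ψ (Icc (0:ℝ) 1) := by
    have hud : UniqueDiffOn ℝ (closedBall (0:Euc n) 1) :=
      uniqueDiffOn_convex (convex_closedBall _ _)
        (by rw [interior_closedBall (0:Euc n) one_ne_zero]; exact ⟨0, by simp⟩)
    have h1 : ContinuousOn (fderivWithin ℝ u (closedBall (0:Euc n) 1))
        (closedBall (0:Euc n) 1) := hC1.continuousOn_fderivWithin hud le_rfl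
    have h2 : ContinuousOn (fun s : ℝ => fderivWithin ℝ u (closedBall (0:Euc n) 1) (s • e))
        (Icc (0:ℝ) 1) := h1.comp hsmul_cont.continuousOn hmaps
    exact (ContinuousLinearMap.apply ℝ ℝ e).continuous.comp_continuousOn h2
  have hG1 : G 1 = 0 := hbd _ (by rw [hse 1 zero_le_one])
  have hGx : u x = G r := hrad x (r • e) (by rw [hse r hx0.le])
  -- derivative of G
  have hgd : ∀ s ∈ Ioo (0:ℝ) 1, HasDerivAt G (ψ s) s := by
    intro s hs
    have hmem : s • e ∈ ball (0:Euc n) 1 := by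
      rw [mem_ball_zero_iff, hse s hs.1.le]; exact hs.2
    have hnh : closedBall (0:Euc n) 1 ∈ nhds (s • e) :=
      mem_nhds_iff.mpr ⟨ball 0 1, ball_subset_closedBall, isOpen_ball, hmem⟩
    have hdiff : DifferentiableAt ℝ u (s • e) :=
      ((hC1.contDiffAt hnh).differentiableAt one_ne_zero)
    have hψeq : ψ s = fderiv ℝ u (s • e) e := by
      simp only [hψ']; rw [fderivWithin_of_mem_nhds hnh]
    have hds : HasDerivAt (fun t : ℝ => t • e) e s := by
      simpa using (hasDerivAt_id s).smul_const e
    rw [hψeq]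
    exact hdiff.hasFDerivAt.comp_hasDerivAt s hds
  -- |ψ ‖y‖| bounds the gradient from below
  have hkey : ∀ y : Euc n, 0 < ‖y‖ → ‖y‖ < 1 → |ψ ‖y‖| ≤ ‖gradient u y‖ := by
    intro y hy0 hy1
    set w : Euc n := ‖y‖⁻¹ • y with hw'
    have hww : ‖w‖ = 1 := by
      rw [hw', norm_smul, norm_inv, norm_norm, inv_mul_cancel₀ hy0.ne']
    have hyw : ‖y‖ • w = y := by rw [hw', smul_smul, mul_inv_cancel₀ hy0.ne', one_smul]
    have hmem : y ∈ ball (0:Euc n) 1 := mem_ball_zero_iff.mpr hy1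
    have hnh : closedBall (0:Euc n) 1 ∈ nhds y :=
      mem_nhds_iff.mpr ⟨ball 0 1, ball_subset_closedBall, isOpen_ball, hmem⟩
    have hdiff : DifferentiableAt ℝ u y := ((hC1.contDiffAt hnh).differentiableAt one_ne_zero)
    have hds : HasDerivAt (fun t : ℝ => t • w) w ‖y‖ := by
      simpa using (hasDerivAt_id ‖y‖).smul_const w
    have H1 : HasDerivAt (fun t : ℝ => u (t • w)) (fderiv ℝ u y w) ‖y‖ := by
      have hy' : HasFDerivAt u (fderiv ℝ u y) (‖y‖ • w) := by
        rw [hyw]; exact hdiff.hasFDerivAt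
      exact hy'.comp_hasDerivAt _ hds
    have heq : G =ᶠ[nhds ‖y‖] (fun t : ℝ => u (t • w)) := by
      filter_upwards [eventually_gt_nhds hy0] with t ht
      exact hrad (t • e) (t • w)
        (by rw [hse t ht.le, norm_smul, hww, mul_one, Real.norm_eq_abs, abs_of_pos ht])
    have H2 : HasDerivAt G (fderiv ℝ u y w) ‖y‖ := H1.congr_of_eventuallyEq heq
    have H3 : HasDerivAt G (ψ ‖y‖) ‖y‖ := hgd _ ⟨hy0, hy1⟩
    have hval : ψ ‖y‖ = fderiv ℝ u y w := H3.unique H2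
    rw [hval]
    calc |fderiv ℝ u y w| = ‖fderiv ℝ u y w‖ := rfl
      _ ≤ ‖fderiv ℝ u y‖ * ‖w‖ := (fderiv ℝ u y).le_opNorm w
      _ = ‖gradient u y‖ := by
          rw [hww, mul_one]; unfold gradient; rw [LinearIsometryEquiv.norm_map]
  -- energy, constants
  set E : ℝ := ∫ y in ball (0:Euc n) 1, ‖y‖ ^ (-a) * ‖gradient u y‖ ^ 2 with hE'
  have hE0 : 0 ≤ E := by
    rw [hE']
    refine setIntegral_nonneg measurableSet_ball fun y _ => ?_
    positivity
  set c : ℝ := (n:ℝ) * (volume (ball (0:Euc n) 1)).toReal with hc'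
  have hc : 0 < c := by
    refine mul_pos (by positivity) ?_
    exact ENNReal.toReal_pos (measure_ball_pos volume 0 one_pos).ne' measure_ball_lt_top.ne
  have hn2 : (0:ℝ) < (n:ℝ) - 2 := by linarith
  set A : ℝ := ∫ s in Ioo r 1, s ^ ((n:ℝ)/2) * ψ s ^ 2 with hA'
  set B : ℝ := ∫ s in Ioo r 1, s ^ (-(n:ℝ)/2) with hB'
  -- the annulus
  set S : Set (Euc n) := ball (0:Euc n) 1 \ closedBall 0 r with hS'
  have hSm : MeasurableSet S := measurableSet_ball.diff measurableSet_closedBall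
  have hSiff : ∀ y : Euc n, y ∈ S ↔ ‖y‖ ∈ Ioo r 1 := by
    intro y
    simp only [hS', mem_diff, mem_ball_zero_iff, mem_closedBall_zero_iff, mem_Ioo, not_le]
    tauto
  have hSsub : S ⊆ ball (0:Euc n) 1 := diff_subset
  -- continuity on the annulus
  have hcontS : ContinuousOn (fun y : Euc n => ‖y‖ ^ (-a) * ψ ‖y‖ ^ 2) S := by
    have h1 : ContinuousOn (fun y : Euc n => ‖y‖ ^ (-a)) S :=
      continuous_norm.continuousOn.rpow_const fun y hy =>
        Or.inl (hx0.trans ((hSiff y).mp hy).1).ne'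
    have h2 : ContinuousOn (fun y : Euc n => ψ ‖y‖) S := by
      refine hψc.comp continuous_norm.continuousOn fun y hy => ?_
      have := (hSiff y).mp hy
      exact ⟨norm_nonneg y, this.2.le⟩
    exact h1.mul (h2.pow 2)
  have hptS : ∀ y ∈ S, ‖y‖ ^ (-a) * ψ ‖y‖ ^ 2 ≤ ‖y‖ ^ (-a) * ‖gradient u y‖ ^ 2 := by
    intro y hy
    obtain ⟨h1, h2⟩ := (hSiff y).mp hy
    have hk := hkey y (hx0.trans h1) h2
    refine mul_le_mul_of_nonneg_left ?_ (Real.rpow_nonneg (norm_nonneg y) _)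
    rw [← sq_abs (ψ ‖y‖)]
    exact pow_le_pow_left₀ (abs_nonneg _) hk 2
  have hIntS : IntegrableOn (fun y : Euc n => ‖y‖ ^ (-a) * ‖gradient u y‖ ^ 2) S :=
    hInt.mono_set hSsub
  have hIntS' : IntegrableOn (fun y : Euc n => ‖y‖ ^ (-a) * ψ ‖y‖ ^ 2) S := by
    refine Integrable.mono hIntS (hcontS.aestronglyMeasurable hSm) ?_
    filter_upwards [ae_restrict_mem hSm] with y hy
    have h1 := hptS y hy
    have h2 : (0:ℝ) ≤ ‖y‖ ^ (-a) * ψ ‖y‖ ^ 2 := by positivity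
    have h3 : (0:ℝ) ≤ ‖y‖ ^ (-a) * ‖gradient u y‖ ^ 2 := by positivity
    rw [Real.norm_eq_abs, Real.norm_eq_abs, abs_of_nonneg h2, abs_of_nonneg h3]
    exact h1
  -- polar coordinates
  have hcA : c * A ≤ E := by
    set F : ℝ → ℝ := (Ioo r 1).indicator (fun s => s ^ (-a) * ψ s ^ 2) with hF'
    have hdim : Module.finrank ℝ (Euc n) = n := by simp [finrank_euclideanSpace]
    have step1 : (∫ y : Euc n, F ‖y‖) = c * A := by
      rw [integral_fun_norm_addHaar volume F, hdim, nsmul_eq_mul, smul_eq_mul]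
      have h1 : (fun y : ℝ => y ^ (n - 1) • F y) =
          (Ioo r 1).indicator (fun s => s ^ (n-1 : ℕ) * (s ^ (-a) * ψ s ^ 2)) := by
        funext s
        by_cases hs : s ∈ Ioo r 1
        · simp [hF', indicator_of_mem hs, smul_eq_mul]
        · simp [hF', indicator_of_notMem hs]
      have hsub : Ioo r 1 ⊆ Ioi (0:ℝ) := fun s hs => hx0.trans hs.1
      rw [h1, setIntegral_indicator measurableSet_Ioo,
        Set.inter_eq_self_of_subset_right hsub]
      have h2 : ∀ s ∈ Ioo r 1,
          s ^ (n-1 : ℕ) * (s ^ (-a) * ψ s ^ 2) = s ^ ((n:ℝ)/2) * ψ s ^ 2 := by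
        intro s hs
        have hs0 : (0:ℝ) < s := hx0.trans hs.1
        have hcast : ((n - 1 : ℕ) : ℝ) = (n:ℝ) - 1 := by
          push_cast [Nat.cast_sub (by omega : 1 ≤ n)]; ring
        rw [← Real.rpow_natCast s (n-1), hcast, ← mul_assoc, ← Real.rpow_add hs0]
        have : (n:ℝ) - 1 + -a = (n:ℝ)/2 := by rw [ha]; ring
        rw [this]
      rw [setIntegral_congr_fun measurableSet_Ioo h2, hA']
      rw [hc', measureReal_def]
      ring
    have step2 : (∫ y : Euc n, F ‖y‖) = ∫ y in S, ‖y‖ ^ (-a) * ψ ‖y‖ ^ 2 := by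
      have h2 : (fun y : Euc n => F ‖y‖) =
          S.indicator (fun y => ‖y‖ ^ (-a) * ψ ‖y‖ ^ 2) := by
        funext y
        by_cases hy : y ∈ S
        · rw [indicator_of_mem hy, hF', indicator_of_mem ((hSiff y).mp hy)]
        · rw [indicator_of_notMem hy, hF',
            indicator_of_notMem (fun h => hy ((hSiff y).mpr h))]
      rw [h2, integral_indicator hSm]
    have step3 : (∫ y in S, ‖y‖ ^ (-a) * ψ ‖y‖ ^ 2) ≤
        ∫ y in S, ‖y‖ ^ (-a) * ‖gradient u y‖ ^ 2 :=
      setIntegral_mono_on hIntS' hIntS hSm hptS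
    have step4 : (∫ y in S, ‖y‖ ^ (-a) * ‖gradient u y‖ ^ 2) ≤ E := by
      rw [hE']
      exact setIntegral_mono_set hInt
        (Eventually.of_forall fun y => by positivity)
        (HasSubset.Subset.eventuallyLE hSsub)
    calc c * A = ∫ y : Euc n, F ‖y‖ := step1.symm
      _ = ∫ y in S, ‖y‖ ^ (-a) * ψ ‖y‖ ^ 2 := step2
      _ ≤ ∫ y in S, ‖y‖ ^ (-a) * ‖gradient u y‖ ^ 2 := step3
      _ ≤ E := step4
  have hA0 : 0 ≤ A := by
    rw [hA']
    refine setIntegral_nonneg measurableSet_Ioo fun s hs => ?_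
    have hs0 : (0:ℝ) < s := hx0.trans hs.1
    positivity
  have hAle : A ≤ E / c := by
    rw [le_div_iff₀ hc, mul_comm]
    exact hcA
  -- Cauchy–Schwarz
  have hCS : (∫ s in Ioo r 1, |ψ s|) ≤ Real.sqrt A * Real.sqrt B := by
    haveI : IsFiniteMeasure (volume.restrict (Ioo r 1)) :=
      ⟨by rw [Measure.restrict_apply_univ]; exact measure_Ioo_lt_top⟩
    set f : ℝ → ℝ := fun s => s ^ ((n:ℝ)/4) * |ψ s| with hf'
    set g : ℝ → ℝ := fun s => s ^ (-(n:ℝ)/4) with hg'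
    have hIoosub : Ioo r 1 ⊆ Icc (0:ℝ) 1 := fun s hs => ⟨(hx0.trans hs.1).le, hs.2.le⟩
    have hfc : ContinuousOn f (Ioo r 1) := by
      refine ContinuousOn.mul ?_ ((hψc.mono hIoosub).abs)
      exact continuousOn_id.rpow_const fun s hs => Or.inr (by positivity)
    have hgc : ContinuousOn g (Ioo r 1) :=
      continuousOn_id.rpow_const fun s hs => Or.inl (hx0.trans hs.1).ne'
    obtain ⟨Cψ, hCψ⟩ := isCompact_Icc.exists_bound_of_continuousOn hψc
    have hmemf : MemLp f (ENNReal.ofReal 2) (volume.restrict (Ioo r 1)) := by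
      refine MemLp.of_bound (hfc.aestronglyMeasurable measurableSet_Ioo) |Cψ| ?_
      filter_upwards [ae_restrict_mem measurableSet_Ioo] with s hs
      have hs0 : (0:ℝ) < s := hx0.trans hs.1
      have h1 : s ^ ((n:ℝ)/4) ≤ 1 := Real.rpow_le_one hs0.le hs.2.le (by positivity)
      have h2 : |ψ s| ≤ |Cψ| := le_trans (hCψ s (hIoosub hs)) (le_abs_self Cψ)
      simp only [hf', Real.norm_eq_abs]
      rw [abs_of_nonneg (by positivity)]
      calc s ^ ((n:ℝ)/4) * |ψ s| ≤ 1 * |Cψ| :=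
            mul_le_mul h1 h2 (abs_nonneg _) zero_le_one
        _ = |Cψ| := one_mul _
    have hmemg : MemLp g (ENNReal.ofReal 2) (volume.restrict (Ioo r 1)) := by
      refine MemLp.of_bound (hgc.aestronglyMeasurable measurableSet_Ioo) (r ^ (-(n:ℝ)/4)) ?_
      filter_upwards [ae_restrict_mem measurableSet_Ioo] with s hs
      simp only [hg', Real.norm_eq_abs]
      rw [abs_of_nonneg (Real.rpow_nonneg (hx0.trans hs.1).le _)]
      exact Real.rpow_le_rpow_of_nonpos hx0 hs.1.le (by
        have : (0:ℝ) ≤ (n:ℝ) := by positivity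
        linarith)
    have hpq : Real.HolderConjugate 2 2 := Real.HolderConjugate.two_two
    have hfnn : 0 ≤ᵐ[volume.restrict (Ioo r 1)] f := by
      filter_upwards [ae_restrict_mem measurableSet_Ioo] with s hs
      have hs0 : (0:ℝ) < s := hx0.trans hs.1
      rw [hf']; positivity
    have hgnn : 0 ≤ᵐ[volume.restrict (Ioo r 1)] g := by
      filter_upwards [ae_restrict_mem measurableSet_Ioo] with s hs
      have hs0 : (0:ℝ) < s := hx0.trans hs.1
      rw [hg']; positivity
    have key := integral_mul_le_Lp_mul_Lq_of_nonneg hpq hfnn hgnn hmemf hmemg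
    have hL : (∫ s in Ioo r 1, f s * g s) = ∫ s in Ioo r 1, |ψ s| := by
      refine setIntegral_congr_fun measurableSet_Ioo fun s hs => ?_
      have hs0 : (0:ℝ) < s := hx0.trans hs.1
      show s ^ ((n:ℝ)/4) * |ψ s| * s ^ (-(n:ℝ)/4) = |ψ s|
      rw [mul_right_comm, ← Real.rpow_add hs0]
      have : (n:ℝ)/4 + -(n:ℝ)/4 = 0 := by ring
      rw [this, Real.rpow_zero, one_mul]
    have hR1 : (∫ s in Ioo r 1, f s ^ (2:ℝ)) = A := by
      rw [hA']
      refine setIntegral_congr_fun measurableSet_Ioo fun s hs => ?_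
      have hs0 : (0:ℝ) < s := hx0.trans hs.1
      show (s ^ ((n:ℝ)/4) * |ψ s|) ^ (2:ℝ) = s ^ ((n:ℝ)/2) * ψ s ^ 2
      rw [Real.rpow_two, mul_pow, sq_abs, ← Real.rpow_natCast (s ^ ((n:ℝ)/4)) 2,
        ← Real.rpow_mul hs0.le]
      have hexp : (n:ℝ)/4 * ((2:ℕ):ℝ) = (n:ℝ)/2 := by push_cast; ring
      rw [hexp]
    have hR2 : (∫ s in Ioo r 1, g s ^ (2:ℝ)) = B := by
      rw [hB']
      refine setIntegral_congr_fun measurableSet_Ioo fun s hs => ?_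
      have hs0 : (0:ℝ) < s := hx0.trans hs.1
      show (s ^ (-(n:ℝ)/4)) ^ (2:ℝ) = s ^ (-(n:ℝ)/2)
      rw [Real.rpow_two, ← Real.rpow_natCast (s ^ (-(n:ℝ)/4)) 2, ← Real.rpow_mul hs0.le]
      have hexp : -(n:ℝ)/4 * ((2:ℕ):ℝ) = -(n:ℝ)/2 := by push_cast; ring
      rw [hexp]
    rw [hL, hR1, hR2] at key
    rw [Real.sqrt_eq_rpow, Real.sqrt_eq_rpow]
    exact key
  -- evaluation of B
  have hBval : B ≤ 2/((n:ℝ)-2) * r ^ (-(((n:ℝ)-2)/2)) := by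
    have hne : -(n:ℝ)/2 ≠ -1 := by
      intro h
      have : (n:ℝ) = 2 := by linarith
      linarith
    have h0m : (0:ℝ) ∉ uIcc r 1 := by
      rw [uIcc_of_le hx1.le]
      intro h
      exact absurd h.1 (not_le.mpr hx0)
    have hBeq : B = (1 - r ^ (-(n:ℝ)/2 + 1)) / (-(n:ℝ)/2 + 1) := by
      rw [hB', ← integral_Ioc_eq_integral_Ioo, ← intervalIntegral.integral_of_le hx1.le,
        integral_rpow (Or.inr ⟨hne, h0m⟩), Real.one_rpow]
    have hzz : -(n:ℝ)/2 + 1 = -(((n:ℝ)-2)/2) := by ring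
    rw [hBeq, hzz]
    have hzneg : -(((n:ℝ)-2)/2) < 0 := by linarith
    have hrz1 : (1:ℝ) ≤ r ^ (-(((n:ℝ)-2)/2)) :=
      Real.one_le_rpow_of_pos_of_le_one_of_nonpos hx0 hx1.le hzneg.le
    rw [div_le_iff_of_neg hzneg]
    have heq : 2/((n:ℝ)-2) * r ^ (-(((n:ℝ)-2)/2)) * (-(((n:ℝ)-2)/2))
        = -(r ^ (-(((n:ℝ)-2)/2))) := by
      field_simp
    rw [heq]
    linarith
  -- fundamental theorem of calculus
  have hsub1 : uIcc r 1 ⊆ Icc (0:ℝ) 1 := by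
    rw [uIcc_of_le hx1.le]
    exact Icc_subset_Icc hx0.le le_rfl
  have hFTC : (∫ s in r..1, ψ s) = G 1 - G r :=
    intervalIntegral.integral_eq_sub_of_hasDeriv_right_of_le hx1.le
      (hGc.mono (Icc_subset_Icc hx0.le le_rfl))
      (fun s hs => (hgd s ⟨hx0.trans hs.1, hs.2⟩).hasDerivWithinAt)
      ((hψc.mono hsub1).intervalIntegrable)
  have habs : |u x| ≤ ∫ s in Ioo r 1, |ψ s| :=
    calc |u x| = |G r| := by rw [hGx]
      _ = |G 1 - G r| := by rw [hG1, zero_sub, abs_neg]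
      _ = |∫ s in r..1, ψ s| := by rw [hFTC]
      _ ≤ ∫ s in r..1, |ψ s| := intervalIntegral.abs_integral_le_integral_abs hx1.le
      _ = ∫ s in Ioo r 1, |ψ s| := by
          rw [intervalIntegral.integral_of_le hx1.le, integral_Ioc_eq_integral_Ioo]
  clear_value A B E c
  -- final assembly
  have hfin : Real.sqrt A * Real.sqrt B ≤
      Real.sqrt (2 / (c * ((n:ℝ)-2))) * r ^ (-(((n:ℝ)-2)/4)) * Real.sqrt E := by
    have h1 : Real.sqrt A ≤ Real.sqrt (E / c) := Real.sqrt_le_sqrt hAle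
    have h2 : Real.sqrt B ≤ Real.sqrt (2/((n:ℝ)-2) * r ^ (-(((n:ℝ)-2)/2))) :=
      Real.sqrt_le_sqrt hBval
    calc Real.sqrt A * Real.sqrt B
        ≤ Real.sqrt (E / c) * Real.sqrt (2/((n:ℝ)-2) * r ^ (-(((n:ℝ)-2)/2))) :=
          mul_le_mul h1 h2 (Real.sqrt_nonneg _) (Real.sqrt_nonneg _)
      _ = Real.sqrt ((E/c) * (2/((n:ℝ)-2) * r ^ (-(((n:ℝ)-2)/2)))) :=
          (Real.sqrt_mul (div_nonneg hE0 hc.le) _).symm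
      _ = Real.sqrt ((2 / (c * ((n:ℝ)-2))) * (r ^ (-(((n:ℝ)-2)/2)) * E)) := by
          congr 1
          field_simp
      _ = Real.sqrt (2 / (c * ((n:ℝ)-2))) *
            (Real.sqrt (r ^ (-(((n:ℝ)-2)/2))) * Real.sqrt E) := by
          rw [Real.sqrt_mul (by positivity), Real.sqrt_mul (by positivity)]
      _ = Real.sqrt (2 / (c * ((n:ℝ)-2))) * r ^ (-(((n:ℝ)-2)/4)) * Real.sqrt E := by
          rw [Real.sqrt_eq_rpow (r ^ (-(((n:ℝ)-2)/2))), ← Real.rpow_mul hx0.le,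
            (by ring : (-(((n:ℝ)-2)/2)) * (1/2) = -(((n:ℝ)-2)/4)), mul_assoc]
  calc |u x| ≤ ∫ s in Ioo r 1, |ψ s| := habs
    _ ≤ Real.sqrt A * Real.sqrt B := hCS
    _ ≤ Real.sqrt (2 / (c * ((n:ℝ)-2))) * r ^ (-(((n:ℝ)-2)/4)) * Real.sqrt E := hfin


open Metric Set in
/-- pointwise (a.e.) radial estimate with weight `|x|^{-b}`, `b ≤ a = (n-2)/2`. -/
theorem statement4 (n : ℕ) (hn : 4 ≤ n) (b : ℝ) (hb : b ≤ ((n : ℝ) - 2) / 2) :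
    ∃ C > (0:ℝ), ∀ u : Euc n → ℝ, Radial n u →
      ContDiffOn ℝ 1 u (closure (Omeg n)) →
      (∀ x : Euc n, ‖x‖ = 1 → u x = 0) →
      IntegrableOn (fun x => ‖x‖ ^ (-(((n : ℝ) - 2) / 2)) * ‖gradient u x‖ ^ 2) (Omeg n) →
      ∀ᵐ x ∂(volume.restrict (Omeg n)),
        |u x| ≤ C * ‖x‖ ^ (-(((n : ℝ) - b - 2) / 2)) *
          (∫ y in Omeg n, ‖y‖ ^ (-(((n : ℝ) - 2) / 2)) * ‖gradient u y‖ ^ 2) ^ ((1:ℝ)/2) := by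
  classical
  unfold Omeg at *
  classical
  have hn4 : (4:ℝ) ≤ (n:ℝ) := by exact_mod_cast hn
  haveI : Nontrivial (Euc n) := by
    refine nontrivial_of_ne (EuclideanSpace.single (⟨0, by omega⟩ : Fin n) (1:ℝ)) 0 ?_
    intro h
    have := congrArg norm h
    rw [EuclideanSpace.norm_single] at this
    simp at this
  set c : ℝ := (n:ℝ) * (volume (Metric.ball (0:Euc n) 1)).toReal with hc'
  have hc : 0 < c := by
    refine mul_pos (by positivity) ?_
    exact ENNReal.toReal_pos (measure_ball_pos volume 0 one_pos).ne' measure_ball_lt_top.ne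
  have hn2 : (0:ℝ) < (n:ℝ) - 2 := by linarith
  refine ⟨Real.sqrt (2 / (c * ((n:ℝ)-2))), Real.sqrt_pos.mpr (by positivity), ?_⟩
  intro u hrad hC1 hbd hInt
  rw [closure_ball (0:Euc n) one_ne_zero] at hC1
  have h0 : ∀ᵐ (x : Euc n) ∂volume, x ≠ 0 := by
    rw [ae_iff]
    have : {x : Euc n | ¬x ≠ 0} = {0} := by ext z; simp
    rw [this]
    exact measure_singleton 0
  filter_upwards [ae_restrict_mem measurableSet_ball, ae_restrict_of_ae h0] with x hx hx0
  have hx0' : 0 < ‖x‖ := norm_pos_iff.mpr hx0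
  have hx1 : ‖x‖ < 1 := mem_ball_zero_iff.mp hx
  have hmain := statement4_aux n hn u hrad hC1 hbd hInt x hx0' hx1
  set E : ℝ := ∫ y in ball (0:Euc n) 1, ‖y‖ ^ (-(((n:ℝ)-2)/2)) * ‖gradient u y‖ ^ 2 with hE'
  have hE0 : 0 ≤ E := by
    rw [hE']
    refine setIntegral_nonneg measurableSet_ball fun y _ => ?_
    positivity
  have hsq : Real.sqrt E = E ^ ((1:ℝ)/2) := Real.sqrt_eq_rpow E
  have hrexp : ‖x‖ ^ (-(((n:ℝ)-2)/4)) ≤ ‖x‖ ^ (-(((n:ℝ) - b - 2)/2)) :=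
    Real.rpow_le_rpow_of_exponent_ge hx0' hx1.le (by linarith)
  calc |u x| ≤ Real.sqrt (2 / (c * ((n:ℝ)-2))) * ‖x‖ ^ (-(((n:ℝ)-2)/4)) * Real.sqrt E :=
        hmain
    _ ≤ Real.sqrt (2 / (c * ((n:ℝ)-2))) * ‖x‖ ^ (-(((n:ℝ) - b - 2)/2)) * Real.sqrt E := by
        have := mul_le_mul_of_nonneg_left hrexp (Real.sqrt_nonneg (2 / (c * ((n:ℝ)-2))))
        exact mul_le_mul_of_nonneg_right this (Real.sqrt_nonneg E)
    _ = Real.sqrt (2 / (c * ((n:ℝ)-2))) * ‖x‖ ^ (-(((n:ℝ) - b - 2)/2)) * E ^ ((1:ℝ)/2) := by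
        rw [hsq]


end
end

section
/- Set a = (n−2)/2 and let q satisfy 2 < q < 4n/(n−2). Then there exists a constant C > 0 (depending only on n and q) such that for every radially symmetric function u ∈ C¹(Ω̄) with u = 0 on ∂Ω and ∫_Ω |x|^{−a}|∇u|² dx < ∞, one has (∫_Ω |u|^q dx)^{1/q} ≤ C (∫_Ω |x|^{−a} |∇u|² dx)^{1/2}. -/
open MeasureTheory Filter

noncomputable section

lemma radial_fderiv_norm {n : ℕ} {u : Euc n → ℝ} (hrad : Radial n u) {x y : Euc n}
    (hx : DifferentiableAt ℝ u x) (hxy : ‖y‖ = ‖x‖) :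
    ‖fderiv ℝ u y‖ = ‖fderiv ℝ u x‖ := by
  set R : Euc n ≃ₗᵢ[ℝ] Euc n := Submodule.reflection (ℝ ∙ (y - x))ᗮ with hR
  have hRy : R y = x := Submodule.reflection_sub hxy
  have hcomp : u ∘ ⇑R = u := by
    funext z; exact hrad _ _ (R.norm_map z)
  have hA : HasFDerivAt (⇑R) R.toLinearIsometry.toContinuousLinearMap y :=
    R.toLinearIsometry.toContinuousLinearMap.hasFDerivAt
  have hux : HasFDerivAt u (fderiv ℝ u x) (R y) := by rw [hRy]; exact hx.hasFDerivAt
  have h2 : HasFDerivAt u ((fderiv ℝ u x).comp R.toLinearIsometry.toContinuousLinearMap) y := by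
    have h2' := hux.comp y hA
    rwa [hcomp] at h2'
  rw [h2.fderiv]
  exact (fderiv ℝ u x).opNorm_comp_linearIsometryEquiv R

set_option maxHeartbeats 2000000 in
/-- weighted Sobolev-type estimate with weight `|x|^{-a}`, `a = (n-2)/2`. -/
theorem statement6 (n : ℕ) (hn : 4 ≤ n) (q : ℝ) (hq1 : 2 < q)
    (hq2 : q < 4 * (n : ℝ) / ((n : ℝ) - 2)) :
    ∃ C > (0:ℝ), ∀ u : Euc n → ℝ, Radial n u →
      ContDiffOn ℝ 1 u (closure (Omeg n)) →
      (∀ x : Euc n, ‖x‖ = 1 → u x = 0) →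
      IntegrableOn (fun x => ‖x‖ ^ (-(((n : ℝ) - 2) / 2)) * ‖gradient u x‖ ^ 2) (Omeg n) →
      (∫ x in Omeg n, |u x| ^ q) ^ ((1:ℝ)/q) ≤
        C * (∫ x in Omeg n, ‖x‖ ^ (-(((n : ℝ) - 2) / 2)) * ‖gradient u x‖ ^ 2) ^ ((1:ℝ)/2) := by
  have hn4 : (4:ℝ) ≤ (n:ℝ) := by exact_mod_cast hn
  have hn2 : (2:ℝ) < (n:ℝ) := by linarith
  have hq0 : (0:ℝ) < q := by linarith
  set a : ℝ := ((n:ℝ) - 2)/2 with ha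
  have ha1 : 1 ≤ a := by rw [ha]; linarith
  set β : ℝ := ((n:ℝ) - 1) - ((n:ℝ)-2) * q / 4 with hβ
  have hβ1 : -1 < β := by
    have hd : (0:ℝ) < (n:ℝ) - 2 := by linarith
    have h1 : q * ((n:ℝ)-2) < 4*(n:ℝ) := by
      have h2 := (lt_div_iff₀ hd).mp hq2
      linarith
    rw [hβ]
    linarith
  haveI : Nontrivial (Euc n) := by
    refine nontrivial_of_ne (EuclideanSpace.single (⟨0, by omega⟩ : Fin n) (1:ℝ)) 0 ?_
    intro hcon
    have := congrArg norm hcon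
    rw [EuclideanSpace.norm_single, norm_zero] at this
    norm_num at this
  set c : ℝ := n * (volume (Metric.ball (0:Euc n) 1)).toReal with hc
  have hcpos : 0 < c := by
    rw [hc]
    have h1 : 0 < (volume (Metric.ball (0:Euc n) 1)).toReal :=
      ENNReal.toReal_pos (Metric.measure_ball_pos volume 0 one_pos).ne' measure_ball_lt_top.ne
    positivity
  set C3 : ℝ := (c * (2/((n:ℝ)-2)) ^ (q/2) / (β+1)) / c ^ (q/2) with hC3
  have hC3pos : 0 < C3 := by
    have h1 : (0:ℝ) < (2/((n:ℝ)-2)) ^ (q/2) := Real.rpow_pos_of_pos (div_pos two_pos (by linarith)) _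
    have h2 : (0:ℝ) < c ^ (q/2) := Real.rpow_pos_of_pos hcpos _
    have h3 : (0:ℝ) < β + 1 := by linarith
    rw [hC3]
    exact div_pos (div_pos (mul_pos hcpos h1) h3) h2
  refine ⟨C3 ^ ((1:ℝ)/q), Real.rpow_pos_of_pos hC3pos _, ?_⟩
  intro u hrad hC1 hbd _hint
  -- basic geometry
  have hmeas : MeasurableSet (Omeg n) := Metric.isOpen_ball.measurableSet
  set e1 : Euc n := EuclideanSpace.single (⟨0, by omega⟩ : Fin n) (1:ℝ) with he1def
  have he1 : ‖e1‖ = 1 := by rw [he1def, EuclideanSpace.norm_single]; norm_num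
  have hclos : closure (Omeg n) = Metric.closedBall (0:Euc n) 1 := closure_ball 0 one_ne_zero
  have hnsmul : ∀ t : ℝ, ‖t • e1‖ = |t| := by
    intro t; rw [norm_smul, he1, Real.norm_eq_abs, mul_one]
  have hsubcl : ∀ t : ℝ, |t| ≤ 1 → t • e1 ∈ closure (Omeg n) := by
    intro t ht; rw [hclos, Metric.mem_closedBall, dist_zero_right, hnsmul]; exact ht
  have hmem : ∀ t : ℝ, |t| < 1 → t • e1 ∈ Omeg n := by
    intro t ht; rw [Omeg, Metric.mem_ball, dist_zero_right, hnsmul]; exact ht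
  have hUD : UniqueDiffOn ℝ (closure (Omeg n)) := by
    rw [hclos]
    exact uniqueDiffOn_convex (convex_closedBall _ _)
      (by rw [interior_closedBall (0:Euc n) one_ne_zero]; exact ⟨0, Metric.mem_ball_self one_pos⟩)
  have hnhds : ∀ x ∈ Omeg n, closure (Omeg n) ∈ nhds x := by
    intro x hx
    exact mem_of_superset ((Metric.isOpen_ball).mem_nhds hx) subset_closure
  have hdiff : ∀ x ∈ Omeg n, DifferentiableAt ℝ u x := by
    intro x hx
    exact ((hC1.differentiableOn one_ne_zero) x (subset_closure hx)).differentiableAt (hnhds x hx)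
  have hfeq : ∀ x ∈ Omeg n, fderivWithin ℝ u (closure (Omeg n)) x = fderiv ℝ u x := by
    intro x hx; exact fderivWithin_of_mem_nhds (hnhds x hx)
  set h : ℝ → ℝ := fun t => ‖fderivWithin ℝ u (closure (Omeg n)) (t • e1)‖ with hh
  set w : ℝ → ℝ := fun t => u (t • e1) with hwdef
  have hw : ∀ x : Euc n, u x = w ‖x‖ := by
    intro x
    exact hrad _ _ (by rw [hnsmul, abs_of_nonneg (norm_nonneg x)])
  have hgradnorm : ∀ x : Euc n, ‖gradient u x‖ = ‖fderiv ℝ u x‖ := by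
    intro x
    exact (InnerProductSpace.toDual ℝ (Euc n)).symm.norm_map _
  have hgn : ∀ x ∈ Omeg n, ‖gradient u x‖ = h ‖x‖ := by
    intro x hx
    have hx1 : ‖x‖ < 1 := by rwa [Omeg, Metric.mem_ball, dist_zero_right] at hx
    have hmem' : ‖x‖ • e1 ∈ Omeg n := hmem _ (by rwa [abs_of_nonneg (norm_nonneg x)])
    have hnn : ‖x‖ = ‖(‖x‖ • e1 : Euc n)‖ := by
      rw [hnsmul, abs_of_nonneg (norm_nonneg x)]
    rw [hgradnorm, hh]
    simp only
    rw [hfeq _ hmem']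
    exact radial_fderiv_norm hrad (hdiff _ hmem') hnn
  have hdcont : ContinuousOn (fun t : ℝ => fderivWithin ℝ u (closure (Omeg n)) (t • e1))
      (Set.Icc (0:ℝ) 1) := by
    have hf' : ContinuousOn (fderivWithin ℝ u (closure (Omeg n))) (closure (Omeg n)) :=
      hC1.continuousOn_fderivWithin hUD le_rfl
    exact hf'.comp ((continuous_id.smul continuous_const).continuousOn)
      (fun t ht => hsubcl t (abs_le.mpr ⟨by linarith [ht.1], ht.2⟩))
  have hhcont : ContinuousOn h (Set.Icc (0:ℝ) 1) := hdcont.norm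
  obtain ⟨M, hM⟩ : ∃ M : ℝ, ∀ t ∈ Set.Icc (0:ℝ) 1, h t ≤ M := by
    obtain ⟨B, hB⟩ := isCompact_Icc.exists_bound_of_continuousOn hhcont
    refine ⟨B, fun t ht => ?_⟩
    have := hB t ht
    rwa [Real.norm_eq_abs, abs_of_nonneg (norm_nonneg _)] at this
  set Φ : ℝ → ℝ := fun t => if t < 1 then t ^ (-a) * h t ^ 2 else 0 with hΦ
  have hpolar : ∀ F : ℝ → ℝ, ∫ x : Euc n, F ‖x‖ = c * ∫ t in Set.Ioi (0:ℝ), t ^ (n-1) * F t := by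
    intro F
    have := MeasureTheory.integral_fun_norm_addHaar (volume : Measure (Euc n)) F
    rw [this]
    simp only [finrank_euclideanSpace, Fintype.card_fin, nsmul_eq_mul, smul_eq_mul]
    rw [hc, mul_assoc, ← integral_const_mul]
    rw [integral_const_mul]; rfl
  have hEeq : ∀ x : Euc n, Φ ‖x‖ =
      (Omeg n).indicator (fun x => ‖x‖ ^ (-a) * ‖gradient u x‖ ^ 2) x := by
    intro x
    by_cases hx : x ∈ Omeg n
    · have hx1 : ‖x‖ < 1 := by rwa [Omeg, Metric.mem_ball, dist_zero_right] at hx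
      rw [Set.indicator_of_mem hx, hΦ]
      simp only [if_pos hx1]
      rw [hgn x hx]
    · have hx1 : ¬ (‖x‖ < 1) := by
        rw [Omeg, Metric.mem_ball, dist_zero_right] at hx
        exact hx
      rw [Set.indicator_of_notMem hx, hΦ]
      simp only [if_neg hx1]
  have hE1 : (∫ x in Omeg n, ‖x‖ ^ (-a) * ‖gradient u x‖ ^ 2) = ∫ x : Euc n, Φ ‖x‖ := by
    rw [← integral_indicator hmeas]
    exact (integral_congr_ae (Eventually.of_forall hEeq)).symm
  set K : ℝ := ∫ t in Set.Ioi (0:ℝ), t ^ (n-1) * Φ t with hKdef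
  have hΦcont : ContinuousOn (fun t : ℝ => t ^ (n-1) * (t ^ (-a) * h t ^ 2))
      (Set.Ioo (0:ℝ) 1) := by
    apply ContinuousOn.mul
    · exact (continuous_pow _).continuousOn
    · apply ContinuousOn.mul
      · exact fun t ht => (Real.continuousAt_rpow_const t (-a) (Or.inl (ne_of_gt ht.1))).continuousWithinAt
      · exact ((hhcont.mono Set.Ioo_subset_Icc_self).pow 2)
  have hΦboundOn : ∀ t ∈ Set.Ioo (0:ℝ) 1, ‖t ^ (n-1) * Φ t‖ ≤ M ^ 2 := by
    intro t ht
    have ht0 : (0:ℝ) < t := ht.1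
    have hM0 : 0 ≤ M := le_trans (norm_nonneg _) (hM 0 (by norm_num))
    have hht : h t ≤ M := hM t ⟨le_of_lt ht.1, le_of_lt ht.2⟩
    rw [hΦ]
    simp only [if_pos ht.2]
    have h1 : t ^ (n-1) * (t ^ (-a) * h t ^ 2) = (t ^ (n-1) * t ^ (-a)) * h t ^ 2 := by ring
    rw [Real.norm_eq_abs, h1, abs_of_nonneg (by positivity)]
    have h2 : t ^ (n-1) * t ^ (-a) ≤ 1 := by
      rw [← Real.rpow_natCast t (n-1), ← Real.rpow_add ht0]
      apply Real.rpow_le_one (le_of_lt ht0) (le_of_lt ht.2)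
      have : ((n-1 : ℕ) : ℝ) = (n:ℝ) - 1 := by
        rw [Nat.cast_sub (by omega)]; norm_num
      rw [this, ha]
      linarith
    have h3 : h t ^ 2 ≤ M ^ 2 := by
      apply pow_le_pow_left₀ (norm_nonneg _) hht
    calc t ^ (n-1) * t ^ (-a) * h t ^ 2 ≤ 1 * (M ^ 2) :=
          mul_le_mul h2 h3 (by positivity) one_pos.le
      _ = M ^ 2 := one_mul _
  have hmaster_int : IntegrableOn (fun t => t ^ (n-1) * Φ t) (Set.Ioi (0:ℝ)) := by
    have hsplit : Set.Ioi (0:ℝ) = Set.Ioo 0 1 ∪ Set.Ici 1 := (Set.Ioo_union_Ici_eq_Ioi one_pos).symm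
    rw [hsplit]
    apply IntegrableOn.union
    · -- on Ioo 0 1 : bounded and a.e. strongly measurable
      have hmeas' : AEStronglyMeasurable (fun t => t ^ (n-1) * Φ t)
          (volume.restrict (Set.Ioo (0:ℝ) 1)) := by
        apply AEStronglyMeasurable.congr
          (hΦcont.aestronglyMeasurable measurableSet_Ioo)
        rw [Filter.EventuallyEq, ae_restrict_iff' measurableSet_Ioo]
        apply Eventually.of_forall
        intro t ht
        rw [hΦ]
        simp only [if_pos ht.2]
      haveI : IsFiniteMeasure (volume.restrict (Set.Ioo (0:ℝ) 1)) :=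
        ⟨by rw [Measure.restrict_apply_univ]; exact measure_Ioo_lt_top⟩
      apply Integrable.mono' (integrable_const (M ^ 2)) hmeas'
      rw [ae_restrict_iff' measurableSet_Ioo]
      exact Eventually.of_forall hΦboundOn
    · have : Set.EqOn (fun t : ℝ => t ^ (n-1) * Φ t) 0 (Set.Ici 1) := by
        intro t ht
        rw [hΦ]
        simp only [if_neg (not_lt.mpr (Set.mem_Ici.mp ht)), mul_zero]
        rfl
      exact (integrableOn_congr_fun this measurableSet_Ici).mpr (integrableOn_zero)
  have hmaster_nonneg : ∀ t ∈ Set.Ioi (0:ℝ), 0 ≤ t ^ (n-1) * Φ t := by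
    intro t ht
    have ht' : (0:ℝ) < t := ht
    rw [hΦ]
    by_cases h1 : t < 1
    · simp only [if_pos h1]
      positivity
    · simp only [if_neg h1, mul_zero]; exact le_rfl
  have hEK : (∫ x in Omeg n, ‖x‖ ^ (-a) * ‖gradient u x‖ ^ 2) = c * K := by
    rw [hE1, hpolar Φ, hKdef]
  have hK0 : 0 ≤ K := by
    rw [hKdef]
    exact setIntegral_nonneg measurableSet_Ioi hmaster_nonneg
  -- pointwise decay estimate
  have hsq : ∀ x : ℝ, x ^ (2:ℝ) = x ^ 2 := fun x => by
    rw [show (2:ℝ) = ((2:ℕ):ℝ) by norm_num, Real.rpow_natCast]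
  have hdecay : ∀ r ∈ Set.Ioo (0:ℝ) 1,
      |w r| ≤ (2/((n:ℝ)-2)) ^ ((1:ℝ)/2) * r ^ (-(a/2)) * K ^ ((1:ℝ)/2) := by
    intro r hr
    obtain ⟨hr0, hr1⟩ := hr
    set d : ℝ → ℝ := fun t => (fderivWithin ℝ u (closure (Omeg n)) (t • e1)) e1 with hd
    have hdc : ContinuousOn d (Set.Icc r 1) :=
      (hdcont.mono (Set.Icc_subset_Icc (le_of_lt hr0) le_rfl)).clm_apply continuousOn_const
    have hwc : ContinuousOn w (Set.Icc r 1) :=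
      (hC1.continuousOn).comp ((continuous_id.smul continuous_const).continuousOn)
        (fun t ht => hsubcl t (abs_le.mpr ⟨by linarith [ht.1], ht.2⟩))
    have hderiv : ∀ t ∈ Set.Ioo r 1, HasDerivWithinAt w (d t) (Set.Ioi t) t := by
      intro t ht
      have htm : t • e1 ∈ Omeg n := hmem t (abs_lt.mpr ⟨by linarith [ht.1], ht.2⟩)
      have h1 : HasDerivAt (fun s : ℝ => s • e1) e1 t := by
        simpa using (hasDerivAt_id t).smul_const e1
      have h2 : HasDerivAt w ((fderiv ℝ u (t • e1)) e1) t :=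
        (hdiff _ htm).hasFDerivAt.comp_hasDerivAt t h1
      have h3 : d t = (fderiv ℝ u (t • e1)) e1 := by
        rw [hd]; simp only; rw [hfeq _ htm]
      rw [h3]
      exact h2.hasDerivWithinAt
    have hii : IntervalIntegrable d volume r 1 := by
      apply ContinuousOn.intervalIntegrable
      rwa [Set.uIcc_of_le (le_of_lt hr1)]
    have hFTC : ∫ t in r..1, d t = w 1 - w r :=
      intervalIntegral.integral_eq_sub_of_hasDeriv_right_of_le (le_of_lt hr1) hwc hderiv hii
    have hw1 : w 1 = 0 := by
      rw [hwdef]; simp only; rw [one_smul]; exact hbd e1 he1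
    have hhii : IntervalIntegrable h volume r 1 := by
      apply ContinuousOn.intervalIntegrable
      rw [Set.uIcc_of_le (le_of_lt hr1)]
      exact hhcont.mono (Set.Icc_subset_Icc (le_of_lt hr0) le_rfl)
    have habs : |w r| ≤ ∫ t in r..1, h t := by
      have h1 : w r = -(∫ t in r..1, d t) := by rw [hFTC, hw1]; ring
      rw [h1, abs_neg]
      calc |∫ t in r..1, d t| ≤ ∫ t in r..1, |d t| :=
            intervalIntegral.abs_integral_le_integral_abs (le_of_lt hr1)
        _ ≤ ∫ t in r..1, h t := by
            apply intervalIntegral.integral_mono_on (le_of_lt hr1) hii.abs hhii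
            intro t _
            calc |d t| ≤ ‖fderivWithin ℝ u (closure (Omeg n)) (t • e1)‖ * ‖e1‖ :=
                  (fderivWithin ℝ u (closure (Omeg n)) (t • e1)).le_opNorm e1
              _ = h t := by rw [he1, mul_one]
    -- Cauchy-Schwarz
    haveI : IsFiniteMeasure (volume.restrict (Set.Ioc r 1)) :=
      ⟨by rw [Measure.restrict_apply_univ]; exact measure_Ioc_lt_top⟩
    set f : ℝ → ℝ := fun t => t ^ (-(n:ℝ)/4) with hf
    set g : ℝ → ℝ := fun t => t ^ ((n:ℝ)/4) * h t with hg
    have hfm : AEStronglyMeasurable f (volume.restrict (Set.Ioc r 1)) := by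
      apply ContinuousOn.aestronglyMeasurable _ measurableSet_Ioc
      exact fun t ht =>
        (Real.continuousAt_rpow_const t _ (Or.inl (ne_of_gt (lt_trans hr0 ht.1)))).continuousWithinAt
    have hgm : AEStronglyMeasurable g (volume.restrict (Set.Ioc r 1)) := by
      apply ContinuousOn.aestronglyMeasurable _ measurableSet_Ioc
      apply ContinuousOn.mul
      · exact fun t ht =>
          (Real.continuousAt_rpow_const t _ (Or.inl (ne_of_gt (lt_trans hr0 ht.1)))).continuousWithinAt
      · exact hhcont.mono (fun t ht => ⟨le_trans (le_of_lt hr0) (le_of_lt ht.1), ht.2⟩)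
    have hfnn : 0 ≤ᵐ[volume.restrict (Set.Ioc r 1)] f := by
      rw [Filter.EventuallyLE, ae_restrict_iff' measurableSet_Ioc]
      apply Eventually.of_forall
      intro t ht
      exact Real.rpow_nonneg (le_trans hr0.le (le_of_lt ht.1)) _
    have hgnn : 0 ≤ᵐ[volume.restrict (Set.Ioc r 1)] g := by
      rw [Filter.EventuallyLE, ae_restrict_iff' measurableSet_Ioc]
      apply Eventually.of_forall
      intro t ht
      exact mul_nonneg (Real.rpow_nonneg (le_trans hr0.le (le_of_lt ht.1)) _) (norm_nonneg _)
    have hfb : MemLp f (ENNReal.ofReal 2) (volume.restrict (Set.Ioc r 1)) := by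
      apply MemLp.of_bound hfm (r ^ (-(n:ℝ)/4))
      rw [ae_restrict_iff' measurableSet_Ioc]
      apply Eventually.of_forall
      intro t ht
      rw [hf, Real.norm_eq_abs]
      simp only
      rw [abs_of_nonneg (Real.rpow_nonneg (le_trans hr0.le (le_of_lt ht.1)) _)]
      exact Real.rpow_le_rpow_of_nonpos hr0 (le_of_lt ht.1)
        (by rw [neg_div]; exact neg_nonpos.mpr (by positivity))
    have hM0 : 0 ≤ M := le_trans (norm_nonneg _) (hM 0 (by norm_num))
    have hgb : MemLp g (ENNReal.ofReal 2) (volume.restrict (Set.Ioc r 1)) := by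
      apply MemLp.of_bound hgm M
      rw [ae_restrict_iff' measurableSet_Ioc]
      apply Eventually.of_forall
      intro t ht
      have ht0 : (0:ℝ) < t := lt_trans hr0 ht.1
      rw [hg, Real.norm_eq_abs]
      simp only
      rw [abs_of_nonneg (mul_nonneg (Real.rpow_nonneg ht0.le _) (norm_nonneg _))]
      calc t ^ ((n:ℝ)/4) * h t ≤ 1 * M :=
            mul_le_mul (Real.rpow_le_one ht0.le ht.2 (by positivity))
              (hM t ⟨ht0.le, ht.2⟩) (norm_nonneg _) one_pos.le
        _ = M := one_mul M
    have hCS := integral_mul_le_Lp_mul_Lq_of_nonneg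
      Real.HolderConjugate.two_two hfnn hgnn hfb hgb
    have hIoc : ∫ t in r..1, h t = ∫ t in Set.Ioc r 1, f t * g t := by
      rw [intervalIntegral.integral_of_le (le_of_lt hr1)]
      apply setIntegral_congr_fun measurableSet_Ioc
      intro t ht
      have ht0 : (0:ℝ) < t := lt_trans hr0 ht.1
      rw [hf, hg]
      simp only
      rw [← mul_assoc, ← Real.rpow_add ht0,
        show -(n:ℝ)/4 + (n:ℝ)/4 = 0 by ring, Real.rpow_zero, one_mul]
    have hf2 : ∫ t in Set.Ioc r 1, f t ^ (2:ℝ) = ∫ t in Set.Ioc r 1, t ^ (-(n:ℝ)/2) := by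
      apply setIntegral_congr_fun measurableSet_Ioc
      intro t ht
      have ht0 : (0:ℝ) < t := lt_trans hr0 ht.1
      rw [hf]
      simp only
      rw [← Real.rpow_mul ht0.le, show -(n:ℝ)/4 * 2 = -(n:ℝ)/2 by ring]
    have hg2 : ∫ t in Set.Ioc r 1, g t ^ (2:ℝ) = ∫ t in Set.Ioc r 1, t ^ ((n:ℝ)/2) * h t ^ 2 := by
      apply setIntegral_congr_fun measurableSet_Ioc
      intro t ht
      have ht0 : (0:ℝ) < t := lt_trans hr0 ht.1
      rw [hg]
      simp only
      rw [Real.mul_rpow (Real.rpow_nonneg ht0.le _) (norm_nonneg _), ← Real.rpow_mul ht0.le,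
        hsq (h t), show (n:ℝ)/4 * 2 = (n:ℝ)/2 by ring]
    have hX : ∫ t in Set.Ioc r 1, t ^ (-(n:ℝ)/2) ≤ 2/((n:ℝ)-2) * r ^ (-a) := by
      have h0mem : (0:ℝ) ∉ Set.uIcc r 1 := by
        rw [Set.uIcc_of_le (le_of_lt hr1)]
        intro hmem0
        exact absurd hmem0.1 (not_le.mpr hr0)
      have hne : -(n:ℝ)/2 ≠ -1 := by
        intro hcon
        rw [neg_div] at hcon
        have : (n:ℝ) = 2 := by linarith [neg_injective hcon]
        linarith
      have hval : ∫ t in r..1, t ^ (-(n:ℝ)/2) =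
          ((1:ℝ) ^ (-(n:ℝ)/2 + 1) - r ^ (-(n:ℝ)/2 + 1)) / (-(n:ℝ)/2 + 1) :=
        integral_rpow (Or.inr ⟨hne, h0mem⟩)
      have hexp : -(n:ℝ)/2 + 1 = -a := by rw [ha]; ring
      rw [← intervalIntegral.integral_of_le (le_of_lt hr1), hval, Real.one_rpow, hexp]
      have ha0 : (0:ℝ) < a := by linarith
      have heq : (1 - r ^ (-a)) / (-a) = (r ^ (-a) - 1) / a := by
        rw [div_neg, ← neg_div]
        congr 1
        ring
      rw [heq]
      have h2a : 2/((n:ℝ)-2) * r ^ (-a) = r ^ (-a) / a := by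
        rw [ha]
        field_simp
      rw [h2a]
      exact (div_le_div_iff_of_pos_right ha0).mpr (by linarith)
    have hY : ∫ t in Set.Ioc r 1, t ^ ((n:ℝ)/2) * h t ^ 2 ≤ K := by
      rw [integral_Ioc_eq_integral_Ioo]
      have hexp2 : ((n-1:ℕ):ℝ) + -a = (n:ℝ)/2 := by
        rw [Nat.cast_sub (by omega : 1 ≤ n), ha]
        push_cast
        ring
      have hcongr : ∫ t in Set.Ioo r 1, t ^ ((n:ℝ)/2) * h t ^ 2
          = ∫ t in Set.Ioo r 1, t ^ (n-1) * Φ t := by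
        apply setIntegral_congr_fun measurableSet_Ioo
        intro t ht
        have ht0 : (0:ℝ) < t := lt_trans hr0 ht.1
        rw [hΦ]
        simp only [if_pos ht.2]
        rw [← mul_assoc, ← Real.rpow_natCast t (n-1), ← Real.rpow_add ht0, hexp2]
      rw [hcongr, hKdef]
      apply setIntegral_mono_set hmaster_int
      · rw [Filter.EventuallyLE, ae_restrict_iff' measurableSet_Ioi]
        exact Eventually.of_forall hmaster_nonneg
      · exact HasSubset.Subset.eventuallyLE (fun t ht => lt_trans hr0 ht.1)
    have hX0 : 0 ≤ ∫ t in Set.Ioc r 1, t ^ (-(n:ℝ)/2) :=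
      setIntegral_nonneg measurableSet_Ioc
        (fun t ht => Real.rpow_nonneg (le_trans hr0.le (le_of_lt ht.1)) _)
    have hY0 : 0 ≤ ∫ t in Set.Ioc r 1, t ^ ((n:ℝ)/2) * h t ^ 2 :=
      setIntegral_nonneg measurableSet_Ioc (fun t ht =>
        mul_nonneg (Real.rpow_nonneg (le_trans hr0.le (le_of_lt ht.1)) _) (by positivity))
    calc |w r| ≤ ∫ t in r..1, h t := habs
      _ ≤ (∫ t in Set.Ioc r 1, t ^ (-(n:ℝ)/2)) ^ ((1:ℝ)/2)
            * (∫ t in Set.Ioc r 1, t ^ ((n:ℝ)/2) * h t ^ 2) ^ ((1:ℝ)/2) := by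
          rw [hIoc, ← hf2, ← hg2]
          exact hCS
      _ ≤ (2/((n:ℝ)-2) * r ^ (-a)) ^ ((1:ℝ)/2) * K ^ ((1:ℝ)/2) := by
          have hb0 : (0:ℝ) ≤ 2/((n:ℝ)-2) * r ^ (-a) := by
            apply mul_nonneg (div_nonneg (by norm_num) (by linarith)) (Real.rpow_nonneg hr0.le _)
          exact mul_le_mul (Real.rpow_le_rpow hX0 hX (by norm_num))
            (Real.rpow_le_rpow hY0 hY (by norm_num)) (Real.rpow_nonneg hY0 _)
            (Real.rpow_nonneg hb0 _)
      _ = (2/((n:ℝ)-2)) ^ ((1:ℝ)/2) * r ^ (-(a/2)) * K ^ ((1:ℝ)/2) := by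
          rw [Real.mul_rpow (div_nonneg (by norm_num) (by linarith)) (Real.rpow_nonneg hr0.le _),
            ← Real.rpow_mul hr0.le]
          have : -a * ((1:ℝ)/2) = -(a/2) := by ring
          rw [this]
  -- the left-hand side
  set G : ℝ → ℝ := fun t => if t < 1 then |w t| ^ q else 0 with hG
  have hGeq : ∀ x : Euc n, G ‖x‖ = (Omeg n).indicator (fun x => |u x| ^ q) x := by
    intro x
    by_cases hx : x ∈ Omeg n
    · have hx1 : ‖x‖ < 1 := by rwa [Omeg, Metric.mem_ball, dist_zero_right] at hx
      rw [Set.indicator_of_mem hx, hG]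
      simp only [if_pos hx1]
      rw [← hw x]
    · have hx1 : ¬ (‖x‖ < 1) := by
        rw [Omeg, Metric.mem_ball, dist_zero_right] at hx
        exact hx
      rw [Set.indicator_of_notMem hx, hG]
      simp only [if_neg hx1]
  have hL1 : (∫ x in Omeg n, |u x| ^ q) = c * ∫ t in Set.Ioi (0:ℝ), t ^ (n-1) * G t := by
    rw [← integral_indicator hmeas, ← hpolar G]
    exact integral_congr_ae (Eventually.of_forall fun x => (hGeq x).symm)
  have hLbound : (∫ t in Set.Ioi (0:ℝ), t ^ (n-1) * G t) ≤
      ((2/((n:ℝ)-2)) ^ (q/2) * K ^ (q/2)) * (1/(β+1)) := by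
    have hd0 : (0:ℝ) ≤ 2/((n:ℝ)-2) := div_nonneg (by norm_num) (by linarith)
    set C1 : ℝ := (2/((n:ℝ)-2)) ^ (q/2) * K ^ (q/2) with hC1def
    have hC1nn : 0 ≤ C1 :=
      mul_nonneg (Real.rpow_nonneg hd0 _) (Real.rpow_nonneg hK0 _)
    have hptw : ∀ t ∈ Set.Ioo (0:ℝ) 1, t ^ (n-1) * G t ≤ C1 * t ^ β := by
      intro t ht
      have ht0 : (0:ℝ) < t := ht.1
      rw [hG]
      simp only [if_pos ht.2]
      have h1 : |w t| ≤ (2/((n:ℝ)-2)) ^ ((1:ℝ)/2) * t ^ (-(a/2)) * K ^ ((1:ℝ)/2) := hdecay t ht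
      have h2 : |w t| ^ q ≤ ((2/((n:ℝ)-2)) ^ ((1:ℝ)/2) * t ^ (-(a/2)) * K ^ ((1:ℝ)/2)) ^ q :=
        Real.rpow_le_rpow (abs_nonneg _) h1 hq0.le
      have hA0 : (0:ℝ) ≤ (2/((n:ℝ)-2)) ^ ((1:ℝ)/2) := Real.rpow_nonneg hd0 _
      have ht0' : (0:ℝ) ≤ t ^ (-(a/2)) := Real.rpow_nonneg ht0.le _
      have h3 : ((2/((n:ℝ)-2)) ^ ((1:ℝ)/2) * t ^ (-(a/2)) * K ^ ((1:ℝ)/2)) ^ q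
          = (2/((n:ℝ)-2)) ^ (q/2) * t ^ (-(a/2)*q) * K ^ (q/2) := by
        rw [Real.mul_rpow (mul_nonneg hA0 ht0') (Real.rpow_nonneg hK0 _),
          Real.mul_rpow hA0 ht0', ← Real.rpow_mul hd0,
          ← Real.rpow_mul ht0.le, ← Real.rpow_mul hK0,
          show (1:ℝ)/2*q = q/2 by ring]
      calc t ^ (n-1) * |w t| ^ q
          ≤ t ^ (n-1) * ((2/((n:ℝ)-2)) ^ (q/2) * t ^ (-(a/2)*q) * K ^ (q/2)) := by
            apply mul_le_mul_of_nonneg_left _ (by positivity)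
            rw [← h3]
            exact h2
        _ = C1 * (t ^ (n-1) * t ^ (-(a/2)*q)) := by rw [hC1def]; ring
        _ = C1 * t ^ β := by
            rw [← Real.rpow_natCast t (n-1), ← Real.rpow_add ht0]
            have hexp3 : ((n-1:ℕ):ℝ) + (-(a/2)*q) = β := by
              rw [Nat.cast_sub (by omega : 1 ≤ n), ha, hβ]
              push_cast
              ring
            rw [hexp3]
    have hwc01 : ContinuousOn w (Set.Icc (0:ℝ) 1) :=
      (hC1.continuousOn).comp ((continuous_id.smul continuous_const).continuousOn)
        (fun t ht => hsubcl t (abs_le.mpr ⟨by linarith [ht.1], ht.2⟩))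
    have hGcont : ContinuousOn (fun t : ℝ => t ^ (n-1) * |w t| ^ q) (Set.Ioo (0:ℝ) 1) := by
      apply ContinuousOn.mul
      · exact (continuous_pow _).continuousOn
      · apply ContinuousOn.rpow_const
        · exact ((hwc01.mono Set.Ioo_subset_Icc_self).abs)
        · exact fun t _ => Or.inr hq0.le
    have hrpow_int : IntegrableOn (fun t : ℝ => t ^ β) (Set.Ioo (0:ℝ) 1) := by
      have : IntervalIntegrable (fun t : ℝ => t ^ β) volume 0 1 := intervalIntegral.intervalIntegrable_rpow' hβ1
      rw [intervalIntegrable_iff_integrableOn_Ioc_of_le zero_le_one] at this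
      exact this.mono_set Set.Ioo_subset_Ioc_self
    have hbnd_int : IntegrableOn (fun t : ℝ => C1 * t ^ β) (Set.Ioo (0:ℝ) 1) :=
      hrpow_int.const_mul C1
    have hGmeas : AEStronglyMeasurable (fun t : ℝ => t ^ (n-1) * G t)
        (volume.restrict (Set.Ioo (0:ℝ) 1)) := by
      apply AEStronglyMeasurable.congr (hGcont.aestronglyMeasurable measurableSet_Ioo)
      rw [Filter.EventuallyEq, ae_restrict_iff' measurableSet_Ioo]
      apply Eventually.of_forall
      intro t ht
      rw [hG]
      simp only [if_pos ht.2]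
    have hGnonneg : ∀ t : ℝ, 0 ≤ t → 0 ≤ t ^ (n-1) * G t := by
      intro t ht
      rw [hG]
      by_cases h1 : t < 1
      · simp only [if_pos h1]
        apply mul_nonneg (by positivity) (Real.rpow_nonneg (abs_nonneg _) _)
      · simp only [if_neg h1, mul_zero]
        exact le_rfl
    have hGint : IntegrableOn (fun t : ℝ => t ^ (n-1) * G t) (Set.Ioo (0:ℝ) 1) := by
      apply Integrable.mono' hbnd_int hGmeas
      rw [ae_restrict_iff' measurableSet_Ioo]
      apply Eventually.of_forall
      intro t ht
      rw [Real.norm_eq_abs, abs_of_nonneg (hGnonneg t ht.1.le)]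
      exact hptw t ht
    have hzeroIci : Set.EqOn (fun t : ℝ => t ^ (n-1) * G t) 0 (Set.Ici 1) := by
      intro t ht
      rw [hG]
      simp only [if_neg (not_lt.mpr (Set.mem_Ici.mp ht)), mul_zero]
      rfl
    have hsplit2 : Set.Ioi (0:ℝ) = Set.Ioo 0 1 ∪ Set.Ici 1 := (Set.Ioo_union_Ici_eq_Ioi one_pos).symm
    have hIciInt : IntegrableOn (fun t : ℝ => t ^ (n-1) * G t) (Set.Ici (1:ℝ)) :=
      (integrableOn_congr_fun hzeroIci measurableSet_Ici).mpr integrableOn_zero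
    have hdisj : Disjoint (Set.Ioo (0:ℝ) 1) (Set.Ici (1:ℝ)) := by
      rw [Set.disjoint_left]
      intro t ht ht'
      exact absurd ht.2 (not_lt.mpr ht')
    have hval : ∫ t in Set.Ioo (0:ℝ) 1, t ^ β = 1/(β+1) := by
      rw [← integral_Ioc_eq_integral_Ioo, ← intervalIntegral.integral_of_le zero_le_one,
        integral_rpow (Or.inl hβ1), Real.one_rpow, Real.zero_rpow (by linarith : β + 1 ≠ 0),
        sub_zero]
    calc (∫ t in Set.Ioi (0:ℝ), t ^ (n-1) * G t)
        = (∫ t in Set.Ioo (0:ℝ) 1, t ^ (n-1) * G t) + ∫ t in Set.Ici (1:ℝ), t ^ (n-1) * G t := by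
          rw [hsplit2]
          exact setIntegral_union hdisj measurableSet_Ici hGint hIciInt
      _ = ∫ t in Set.Ioo (0:ℝ) 1, t ^ (n-1) * G t := by
          rw [setIntegral_congr_fun measurableSet_Ici hzeroIci]
          simp
      _ ≤ ∫ t in Set.Ioo (0:ℝ) 1, C1 * t ^ β :=
          setIntegral_mono_on hGint hbnd_int measurableSet_Ioo hptw
      _ = C1 * (1/(β+1)) := by rw [integral_const_mul, hval]
  have hL0 : 0 ≤ ∫ x in Omeg n, |u x| ^ q := by
    apply setIntegral_nonneg hmeas
    intro x _
    positivity
  set E : ℝ := ∫ x in Omeg n, ‖x‖ ^ (-a) * ‖gradient u x‖ ^ 2 with hEdef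
  have hE0 : 0 ≤ E := by
    rw [hEdef]
    apply setIntegral_nonneg hmeas
    intro x _
    positivity
  have hfinal : (∫ x in Omeg n, |u x| ^ q) ≤ C3 * E ^ (q/2) := by
    have hKE : K = E / c := by
      rw [hEK]
      field_simp
    have hstep : (∫ x in Omeg n, |u x| ^ q)
        ≤ c * (((2/((n:ℝ)-2)) ^ (q/2) * K ^ (q/2)) * (1/(β+1))) := by
      rw [hL1]
      exact mul_le_mul_of_nonneg_left hLbound hcpos.le
    have hc2 : c ^ (q/2) ≠ 0 := (Real.rpow_pos_of_pos hcpos _).ne'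
    have hβ2 : β + 1 ≠ 0 := by linarith
    calc (∫ x in Omeg n, |u x| ^ q)
        ≤ c * (((2/((n:ℝ)-2)) ^ (q/2) * K ^ (q/2)) * (1/(β+1))) := hstep
      _ = C3 * E ^ (q/2) := by
          rw [hKE, Real.div_rpow hE0 hcpos.le, hC3]
          field_simp
  have h1q : (0:ℝ) ≤ 1/q := by positivity
  have hmono := Real.rpow_le_rpow hL0 hfinal h1q
  calc (∫ x in Omeg n, |u x| ^ q) ^ ((1:ℝ)/q)
      ≤ (C3 * E ^ (q/2)) ^ ((1:ℝ)/q) := hmono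
    _ = C3 ^ ((1:ℝ)/q) * E ^ ((1:ℝ)/2) := by
        rw [Real.mul_rpow hC3pos.le (Real.rpow_nonneg hE0 _), ← Real.rpow_mul hE0,
          show q/2 * ((1:ℝ)/q) = 1/2 by field_simp]


end
end

section
/- Let α > 0, β = n/(α+n) and γ = (n−2)(1−β). Let u ∈ C¹(Ω̄) be radially symmetric with u = 0 on ∂Ω, with radial profile u(r), and define v: Ω̄ → ℝ by v(x) = u(|x|^β). Then for every continuous function h: ℝ → ℝ with h(0) = 0 one has ∫_Ω |x|^α h(u(x)) dx = β ∫_Ω h(v(x)) dx, and moreover ∫_Ω |∇u|² dx = β^{−1} ∫_Ω |x|^{−γ} |∇v|² dx. -/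
open MeasureTheory Filter

noncomputable section

section Aux

open Real Set

variable {n : ℕ}

lemma hasFDerivAt_norm' (x : Euc n) (hx : x ≠ 0) :
    HasFDerivAt (fun y : Euc n => ‖y‖) (‖x‖⁻¹ • innerSL ℝ x) x := by
  have h0 : (0:ℝ) < ‖x‖ := norm_pos_iff.mpr hx
  have h1 : HasFDerivAt (fun y : Euc n => ‖y‖ ^ 2) (2 • innerSL ℝ x) x :=
    (hasStrictFDerivAt_norm_sq x).hasFDerivAt
  have h2 : HasDerivAt Real.sqrt (1 / (2 * Real.sqrt (‖x‖ ^ 2))) (‖x‖ ^ 2) :=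
    Real.hasDerivAt_sqrt (by positivity)
  have h3 := h2.comp_hasFDerivAt x h1
  have e : (fun y : Euc n => Real.sqrt (‖y‖ ^ 2)) = fun y : Euc n => ‖y‖ := by
    funext y; rw [Real.sqrt_sq (norm_nonneg y)]
  rw [show ((Real.sqrt ∘ fun y : Euc n => ‖y‖ ^ 2)) = fun y : Euc n => ‖y‖ from e] at h3
  refine h3.congr_fderiv ?_
  rw [Real.sqrt_sq (norm_nonneg x)]
  ext y
  simp only [ContinuousLinearMap.coe_smul', Pi.smul_apply, ContinuousLinearMap.smul_apply,
    smul_eq_mul, two_smul, ContinuousLinearMap.add_apply]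
  field_simp
  ring

lemma radial_hasGradientAt {g : ℝ → ℝ} {g' : ℝ} (v : Euc n → ℝ)
    (hv : ∀ y, v y = g ‖y‖) (x : Euc n) (hx : x ≠ 0)
    (hg : HasDerivAt g g' ‖x‖) :
    HasGradientAt v ((g' * ‖x‖⁻¹) • x) x := by
  have h1 := hg.comp_hasFDerivAt x (hasFDerivAt_norm' x hx)
  have e : (fun y : Euc n => g ‖y‖) = v := by funext y; rw [hv]
  rw [show (g ∘ fun y : Euc n => ‖y‖) = v from e] at h1
  rw [hasGradientAt_iff_hasFDerivAt]
  refine h1.congr_fderiv ?_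
  ext y
  simp only [InnerProductSpace.toDual_apply_apply, ContinuousLinearMap.coe_smul', Pi.smul_apply,
    smul_eq_mul, real_inner_smul_left, innerSL_apply_apply]
  ring

lemma radial_norm_gradient {g : ℝ → ℝ} {g' : ℝ} (v : Euc n → ℝ)
    (hv : ∀ y, v y = g ‖y‖) (x : Euc n) (hx : x ≠ 0)
    (hg : HasDerivAt g g' ‖x‖) :
    ‖gradient v x‖ = |g'| := by
  have h0 : (0:ℝ) < ‖x‖ := norm_pos_iff.mpr hx
  rw [(radial_hasGradientAt v hv x hx hg).gradient, norm_smul]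
  simp only [Real.norm_eq_abs, abs_mul, abs_inv, abs_norm]
  field_simp

lemma polar_ball (hn : 0 < n) (f : ℝ → ℝ) (hf1 : ∀ r, 1 ≤ r → f r = 0) :
    (∫ x in Omeg n, f ‖x‖) =
      (n : ℝ) * (volume (Metric.ball (0 : Euc n) 1)).toReal *
        ∫ y in Set.Ioi (0:ℝ), y ^ ((n:ℝ) - 1) * f y := by
  haveI : NeZero n := ⟨hn.ne'⟩
  haveI : Nontrivial (Euc n) := inferInstance
  have hdim : Module.finrank ℝ (Euc n) = n := finrank_euclideanSpace_fin
  have h1 : (∫ x in Omeg n, f ‖x‖) = ∫ x : Euc n, f ‖x‖ := by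
    apply setIntegral_eq_integral_of_forall_compl_eq_zero
    intro x hx
    apply hf1
    simp only [Omeg, Metric.mem_ball, dist_zero_right, not_lt] at hx
    exact hx
  rw [h1, integral_fun_norm_addHaar volume f, hdim, nsmul_eq_mul, smul_eq_mul, mul_assoc]
  congr 1
  congr 1
  apply setIntegral_congr_fun measurableSet_Ioi
  intro y hy
  simp only [smul_eq_mul]
  congr 1
  rw [← Real.rpow_natCast y (n-1), Nat.cast_sub hn, Nat.cast_one]

end Aux

/-- change of variables `v(x) = u(|x|^β)`, `β = n/(α+n)`,
transforming the weighted integrals. -/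
theorem statement12 (n : ℕ) (hn : 4 ≤ n) (α : ℝ) (hα : 0 < α)
    (β γ : ℝ) (hβ : β = (n : ℝ) / (α + n)) (hγ : γ = ((n : ℝ) - 2) * (1 - β))
    (u : Euc n → ℝ) (w : ℝ → ℝ) (hw : ∀ x : Euc n, u x = w ‖x‖)
    (hC1 : ContDiffOn ℝ 1 u (closure (Omeg n)))
    (hbd : ∀ x : Euc n, ‖x‖ = 1 → u x = 0)
    (v : Euc n → ℝ) (hv : ∀ x : Euc n, v x = w (‖x‖ ^ β)) :
    (∀ h : ℝ → ℝ, Continuous h → h 0 = 0 →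
      (∫ x in Omeg n, ‖x‖ ^ α * h (u x)) = β * ∫ x in Omeg n, h (v x)) ∧
    (∫ x in Omeg n, ‖gradient u x‖ ^ 2) =
      β⁻¹ * ∫ x in Omeg n, ‖x‖ ^ (-γ) * ‖gradient v x‖ ^ 2 := by
  have hn0 : 0 < n := by omega
  haveI : NeZero n := ⟨hn0.ne'⟩
  have hnR : (0:ℝ) < n := by exact_mod_cast hn0
  have hαn : (0:ℝ) < α + n := by positivity
  have hβ0 : 0 < β := by rw [hβ]; positivity
  have key : β * (α + (n:ℝ)) = n := by rw [hβ]; field_simp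
  have hms : MeasurableSet (Omeg n) :=
    (show Omeg n = Metric.ball 0 1 from rfl) ▸ measurableSet_ball
  have hiff : ∀ y : ℝ, 0 < y → (y ^ β < 1 ↔ y < 1) := by
    intro y hy
    constructor
    · intro h
      by_contra h1
      push_neg at h1
      have h2 : (1:ℝ) ≤ y ^ β := by
        calc (1:ℝ) = 1 ^ β := (Real.one_rpow β).symm
          _ ≤ y ^ β := Real.rpow_le_rpow zero_le_one h1 hβ0.le
      linarith
    · intro h
      exact Real.rpow_lt_one hy.le h hβ0
  set e : Euc n := EuclideanSpace.single (⟨0, hn0⟩ : Fin n) (1:ℝ) with he_def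
  have he : ‖e‖ = 1 := by simp [he_def]
  have hwr : ∀ r : ℝ, 0 ≤ r → w r = u (r • e) := by
    intro r hr
    rw [hw, norm_smul, he, Real.norm_eq_abs, abs_of_nonneg hr, mul_one]
  set D : ℝ → ℝ := fun r => fderiv ℝ u (r • e) e with hD_def
  have hD : ∀ r ∈ Set.Ioo (0:ℝ) 1, HasDerivAt w (D r) r := by
    intro r hr
    have hball : r • e ∈ Omeg n := by
      show r • e ∈ Metric.ball (0 : Euc n) 1
      simp only [Metric.mem_ball, dist_zero_right, norm_smul, he, Real.norm_eq_abs,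
        abs_of_nonneg hr.1.le, mul_one]
      exact hr.2
    have hopen : IsOpen (Omeg n) := Metric.isOpen_ball
    have hnhds : closure (Omeg n) ∈ nhds (r • e) :=
      mem_nhds_iff.mpr ⟨Omeg n, subset_closure, hopen, hball⟩
    have hdiff : DifferentiableAt ℝ u (r • e) :=
      (hC1.differentiableOn one_ne_zero).differentiableAt hnhds
    have hline : HasDerivAt (fun t : ℝ => t • e) ((1:ℝ) • e) r := (hasDerivAt_id r).smul_const e
    have hcomp := hdiff.hasFDerivAt.comp_hasDerivAt r hline
    rw [one_smul] at hcomp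
    apply hcomp.congr_of_eventuallyEq
    filter_upwards [isOpen_Ioi.mem_nhds hr.1] with t ht
    exact hwr t (le_of_lt ht)
  have hnormlt : ∀ x : Euc n, x ∈ Omeg n → ‖x‖ < 1 := by
    intro x hx
    have hx' : x ∈ Metric.ball (0 : Euc n) 1 := hx
    simpa [Metric.mem_ball, dist_zero_right] using hx'
  have hgradu : ∀ x : Euc n, x ∈ Omeg n → x ≠ 0 → ‖gradient u x‖ ^ 2 = (D ‖x‖) ^ 2 := by
    intro x hx hx0
    have hmem : ‖x‖ ∈ Set.Ioo (0:ℝ) 1 := ⟨norm_pos_iff.mpr hx0, hnormlt x hx⟩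
    rw [radial_norm_gradient u hw x hx0 (hD _ hmem), sq_abs]
  have hgradv : ∀ x : Euc n, x ∈ Omeg n → x ≠ 0 →
      ‖gradient v x‖ ^ 2 = (D (‖x‖ ^ β) * (β * ‖x‖ ^ (β - 1))) ^ 2 := by
    intro x hx hx0
    have hr0 : (0:ℝ) < ‖x‖ := norm_pos_iff.mpr hx0
    have hmem : ‖x‖ ^ β ∈ Set.Ioo (0:ℝ) 1 :=
      ⟨Real.rpow_pos_of_pos hr0 β, Real.rpow_lt_one hr0.le (hnormlt x hx) hβ0⟩
    have hchain : HasDerivAt (fun t : ℝ => w (t ^ β)) (D (‖x‖ ^ β) * (β * ‖x‖ ^ (β - 1))) ‖x‖ := by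
      have := (hD _ hmem).comp ‖x‖ (Real.hasDerivAt_rpow_const (p := β) (Or.inl hr0.ne'))
      exact this
    rw [radial_norm_gradient v (fun y => hv y) x hx0 hchain, sq_abs]
  constructor
  · intro h hcont h0
    set f₁ : ℝ → ℝ := fun r => if r < 1 then r ^ α * h (w r) else 0 with hf₁
    set f₂ : ℝ → ℝ := fun r => if r < 1 then h (w (r ^ β)) else 0 with hf₂
    have hL : (∫ x in Omeg n, ‖x‖ ^ α * h (u x)) = ∫ x in Omeg n, f₁ ‖x‖ := by
      apply setIntegral_congr_fun hms
      intro x hx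
      simp only [hf₁, if_pos (hnormlt x hx), hw]
    have hR : (∫ x in Omeg n, h (v x)) = ∫ x in Omeg n, f₂ ‖x‖ := by
      apply setIntegral_congr_fun hms
      intro x hx
      simp only [hf₂, if_pos (hnormlt x hx), hv]
    rw [hL, hR, polar_ball hn0 f₁ (fun r hr => if_neg (not_lt.mpr hr)),
        polar_ball hn0 f₂ (fun r hr => if_neg (not_lt.mpr hr))]
    have hsub := MeasureTheory.integral_comp_rpow_Ioi_of_pos
      (g := fun y => y ^ ((n:ℝ) - 1) * f₁ y) hβ0
    have hpt : ∀ y ∈ Set.Ioi (0:ℝ),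
        (β * y ^ (β - 1)) • ((y ^ β) ^ ((n:ℝ) - 1) * f₁ (y ^ β))
          = β * (y ^ ((n:ℝ) - 1) * f₂ y) := by
      intro y hy
      have hy0 : (0:ℝ) < y := hy
      by_cases hy1 : y < 1
      · have hyb1 : y ^ β < 1 := (hiff y hy0).mpr hy1
        simp only [hf₁, hf₂, if_pos hy1, if_pos hyb1, smul_eq_mul]
        rw [show ((y:ℝ) ^ β) ^ ((n:ℝ) - 1) = y ^ (β * ((n:ℝ) - 1)) from
              (Real.rpow_mul hy0.le _ _).symm,
            show ((y:ℝ) ^ β) ^ α = y ^ (β * α) from (Real.rpow_mul hy0.le _ _).symm]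
        have hexp : y ^ (β - 1) * (y ^ (β * ((n:ℝ) - 1)) * y ^ (β * α)) = y ^ ((n:ℝ) - 1) := by
          rw [← Real.rpow_add hy0, ← Real.rpow_add hy0]
          congr 1
          linear_combination key
        calc β * y ^ (β - 1) * (y ^ (β * ((n:ℝ) - 1)) * (y ^ (β * α) * h (w (y ^ β))))
            = β * (y ^ (β - 1) * (y ^ (β * ((n:ℝ) - 1)) * y ^ (β * α))) * h (w (y ^ β)) := by
              ring
          _ = β * y ^ ((n:ℝ) - 1) * h (w (y ^ β)) := by rw [hexp]
          _ = β * (y ^ ((n:ℝ) - 1) * h (w (y ^ β))) := by ring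
      · have hyb1 : ¬ y ^ β < 1 := fun hc => hy1 ((hiff y hy0).mp hc)
        simp only [hf₁, hf₂, if_neg hy1, if_neg hyb1, smul_eq_mul]
        ring
    have hI : (∫ y in Set.Ioi (0:ℝ), y ^ ((n:ℝ) - 1) * f₁ y)
        = β * ∫ y in Set.Ioi (0:ℝ), y ^ ((n:ℝ) - 1) * f₂ y := by
      calc (∫ y in Set.Ioi (0:ℝ), y ^ ((n:ℝ) - 1) * f₁ y)
          = ∫ y in Set.Ioi (0:ℝ), (β * y ^ (β - 1)) • ((y ^ β) ^ ((n:ℝ) - 1) * f₁ (y ^ β)) :=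
            hsub.symm
        _ = ∫ y in Set.Ioi (0:ℝ), β * (y ^ ((n:ℝ) - 1) * f₂ y) :=
            MeasureTheory.setIntegral_congr_fun measurableSet_Ioi hpt
        _ = β * ∫ y in Set.Ioi (0:ℝ), y ^ ((n:ℝ) - 1) * f₂ y :=
            MeasureTheory.integral_const_mul _ _
    rw [hI]
    ring
  · set f₃ : ℝ → ℝ := fun r => if r < 1 then (D r) ^ 2 else 0 with hf₃
    set f₄ : ℝ → ℝ := fun r =>
      if r < 1 then r ^ (-γ) * (D (r ^ β) * (β * r ^ (β - 1))) ^ 2 else 0 with hf₄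
    haveI : Nontrivial (Euc n) := inferInstance
    have hae : ∀ᵐ x : Euc n, x ≠ 0 := by
      refine MeasureTheory.ae_iff.mpr ?_
      simp only [ne_eq, not_not]
      have : {x : Euc n | x = 0} = {0} := by ext z; simp
      rw [this]
      exact measure_singleton 0
    have hL : (∫ x in Omeg n, ‖gradient u x‖ ^ 2) = ∫ x in Omeg n, f₃ ‖x‖ := by
      apply MeasureTheory.setIntegral_congr_ae hms
      filter_upwards [hae] with x hx0 hx
      rw [hgradu x hx hx0]
      simp only [hf₃, if_pos (hnormlt x hx)]
    have hR : (∫ x in Omeg n, ‖x‖ ^ (-γ) * ‖gradient v x‖ ^ 2) = ∫ x in Omeg n, f₄ ‖x‖ := by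
      apply MeasureTheory.setIntegral_congr_ae hms
      filter_upwards [hae] with x hx0 hx
      rw [hgradv x hx hx0]
      simp only [hf₄, if_pos (hnormlt x hx)]
    rw [hL, hR, polar_ball hn0 f₃ (fun r hr => if_neg (not_lt.mpr hr)),
        polar_ball hn0 f₄ (fun r hr => if_neg (not_lt.mpr hr))]
    have hsub := MeasureTheory.integral_comp_rpow_Ioi_of_pos
      (g := fun y => y ^ ((n:ℝ) - 1) * f₃ y) hβ0
    have hpt : ∀ y ∈ Set.Ioi (0:ℝ),
        y ^ ((n:ℝ) - 1) * f₄ y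
          = β * ((β * y ^ (β - 1)) • ((y ^ β) ^ ((n:ℝ) - 1) * f₃ (y ^ β))) := by
      intro y hy
      have hy0 : (0:ℝ) < y := hy
      by_cases hy1 : y < 1
      · have hyb1 : y ^ β < 1 := (hiff y hy0).mpr hy1
        simp only [hf₃, hf₄, if_pos hy1, if_pos hyb1, smul_eq_mul]
        rw [show ((y:ℝ) ^ β) ^ ((n:ℝ) - 1) = y ^ (β * ((n:ℝ) - 1)) from
              (Real.rpow_mul hy0.le _ _).symm]
        have h2 : y ^ (β - 1) * y ^ (β * ((n:ℝ) - 1)) = y ^ ((n:ℝ) * β - 1) := by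
          rw [← Real.rpow_add hy0]
          congr 1
          ring
        have h3 : y ^ ((n:ℝ) - 1) * (y ^ (-γ) * (y ^ (β - 1) * y ^ (β - 1)))
            = y ^ ((n:ℝ) * β - 1) := by
          rw [← Real.rpow_add hy0, ← Real.rpow_add hy0, ← Real.rpow_add hy0]
          congr 1
          linear_combination -hγ
        calc y ^ ((n:ℝ) - 1) * (y ^ (-γ) * (D (y ^ β) * (β * y ^ (β - 1))) ^ 2)
            = (D (y ^ β)) ^ 2 * β ^ 2 *
                (y ^ ((n:ℝ) - 1) * (y ^ (-γ) * (y ^ (β - 1) * y ^ (β - 1)))) := by ring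
          _ = (D (y ^ β)) ^ 2 * β ^ 2 * y ^ ((n:ℝ) * β - 1) := by rw [h3]
          _ = (D (y ^ β)) ^ 2 * β ^ 2 * (y ^ (β - 1) * y ^ (β * ((n:ℝ) - 1))) := by rw [h2]
          _ = β * (β * y ^ (β - 1) * (y ^ (β * ((n:ℝ) - 1)) * (D (y ^ β)) ^ 2)) := by ring
      · have hyb1 : ¬ y ^ β < 1 := fun hc => hy1 ((hiff y hy0).mp hc)
        simp only [hf₃, hf₄, if_neg hy1, if_neg hyb1, smul_eq_mul]
        ring
    have hI : (∫ y in Set.Ioi (0:ℝ), y ^ ((n:ℝ) - 1) * f₄ y)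
        = β * ∫ y in Set.Ioi (0:ℝ), y ^ ((n:ℝ) - 1) * f₃ y := by
      calc (∫ y in Set.Ioi (0:ℝ), y ^ ((n:ℝ) - 1) * f₄ y)
          = ∫ y in Set.Ioi (0:ℝ),
              β * ((β * y ^ (β - 1)) • ((y ^ β) ^ ((n:ℝ) - 1) * f₃ (y ^ β))) :=
            MeasureTheory.setIntegral_congr_fun measurableSet_Ioi hpt
        _ = β * ∫ y in Set.Ioi (0:ℝ),
              (β * y ^ (β - 1)) • ((y ^ β) ^ ((n:ℝ) - 1) * f₃ (y ^ β)) :=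
            MeasureTheory.integral_const_mul _ _
        _ = β * ∫ y in Set.Ioi (0:ℝ), y ^ ((n:ℝ) - 1) * f₃ y := by rw [hsub]
    rw [hI]
    have hβne : β ≠ 0 := hβ0.ne'
    field_simp


end
end
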